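/- Every positive critical point of φ(ζ) = (sin ζ/ζ)(2 − cos ζ), i.e., every ζ > 0 satisfying sin ζ/ζ = (2cos²ζ − 2cos ζ − 1)/(cos ζ − 2), when listed in increasing order as ζ₁ < ζ₂ < ⋯, satisfies ζⱼ ∈ ((j−1)π, jπ) for each j ≥ 1; in particular there is exactly one such critical point in each interval ((j−1)π, jπ). -/

import Mathlib

open Real Set

noncomputable def Fc (ζ : ℝ) : ℝ :=
  Real.sin ζ * (Real.cos ζ - 2) - ζ * (2 * (Real.cos ζ)^2 - 2 * Real.cos ζ - 1)

lemma Fc_hasDeriv (ζ : ℝ) :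
    HasDerivAt Fc (2 * ζ * Real.sin ζ * (2 * Real.cos ζ - 1)) ζ := by
  have h1 : HasDerivAt (fun x => Real.sin x * (Real.cos x - 2))
      (Real.cos ζ * (Real.cos ζ - 2) + Real.sin ζ * (-Real.sin ζ)) ζ :=
    (Real.hasDerivAt_sin ζ).mul ((Real.hasDerivAt_cos ζ).sub_const 2)
  have h2 : HasDerivAt (fun x => 2 * (Real.cos x)^2 - 2 * Real.cos x - 1)
      (2 * (2 * Real.cos ζ ^ 1 * (-Real.sin ζ)) - 2 * (-Real.sin ζ)) ζ := by
    have := ((Real.hasDerivAt_cos ζ).pow 2).const_mul 2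
    exact (this.sub ((Real.hasDerivAt_cos ζ).const_mul 2)).sub_const 1
  have h3 := (hasDerivAt_id ζ).mul h2
  have h := h1.sub h3
  refine h.congr_deriv ?_
  simp only [id_eq]
  have hsc := Real.sin_sq_add_cos_sq ζ
  linear_combination -hsc

lemma Fc_cont : Continuous Fc := by
  rw [continuous_iff_continuousAt]
  exact fun x => (Fc_hasDeriv x).differentiableAt.continuousAt

lemma Fc_even (m : ℕ) : Fc ((m:ℝ)*(2*π)) = (m:ℝ)*(2*π) := by
  have h1 : ((2*m:ℕ):ℝ)*π = (m:ℝ)*(2*π) := by push_cast; ring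
  have hs := Real.sin_nat_mul_pi (2*m); rw [h1] at hs
  have hc := Real.cos_nat_mul_two_pi m
  unfold Fc; rw [hs, hc]; ring

lemma Fc_odd (m : ℕ) : Fc ((m:ℝ)*(2*π)+π) = -(3*((m:ℝ)*(2*π)+π)) := by
  have h1 : ((2*m+1:ℕ):ℝ)*π = (m:ℝ)*(2*π)+π := by push_cast; ring
  have hs := Real.sin_nat_mul_pi (2*m+1); rw [h1] at hs
  have hc := Real.cos_nat_mul_two_pi_add_pi m
  unfold Fc; rw [hs, hc]; ring

lemma mem_iff (ζ : ℝ) (hζ : 0 < ζ) :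
    (Real.sin ζ / ζ = (2*(Real.cos ζ)^2 - 2*Real.cos ζ - 1)/(Real.cos ζ - 2))
      ↔ Fc ζ = 0 := by
  have hc : Real.cos ζ - 2 ≠ 0 := by nlinarith [Real.cos_le_one ζ]
  rw [div_eq_div_iff hζ.ne' hc]
  unfold Fc
  constructor <;> intro h <;> linear_combination h

lemma case_even_real (a : ℝ) (ha : 0 ≤ a)
    (hsin : ∀ x ∈ Ioo a (a+π), 0 < Real.sin x)
    (hcos1 : ∀ x ∈ Ioo a (a+π/3), 1/2 < Real.cos x)
    (hcos2 : ∀ x ∈ Ioo (a+π/3) (a+π), Real.cos x < 1/2)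
    (hFa : 0 ≤ Fc a) (hFb : Fc (a+π) < 0) :
    ∃! x, x ∈ Ioo a (a+π) ∧ Fc x = 0 := by
  have hpi := Real.pi_pos
  have hac : a < a + π/3 := by linarith
  have hcb : a + π/3 < a + π := by linarith
  have mono1 : StrictMonoOn Fc (Icc a (a+π/3)) := by
    apply strictMonoOn_of_deriv_pos (convex_Icc _ _) Fc_cont.continuousOn
    intro x hx
    rw [interior_Icc] at hx
    rw [(Fc_hasDeriv x).deriv]
    have hx0 : 0 < x := lt_of_le_of_lt ha hx.1
    have hs := hsin x ⟨hx.1, by linarith [hx.2]⟩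
    have hc := hcos1 x hx
    have : 0 < 2 * Real.cos x - 1 := by linarith
    positivity
  have anti2 : StrictAntiOn Fc (Icc (a+π/3) (a+π)) := by
    apply strictAntiOn_of_deriv_neg (convex_Icc _ _) Fc_cont.continuousOn
    intro x hx
    rw [interior_Icc] at hx
    rw [(Fc_hasDeriv x).deriv]
    have hx0 : 0 < x := by linarith [hx.1]
    have hs := hsin x ⟨by linarith [hx.1], hx.2⟩
    have hc := hcos2 x hx
    have h1 : 0 < 2 * x * Real.sin x := by positivity
    have h2 : 2 * Real.cos x - 1 < 0 := by linarith
    exact mul_neg_of_pos_of_neg h1 h2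
  have hFc : 0 < Fc (a+π/3) := by
    have := mono1 (left_mem_Icc.2 hac.le) (right_mem_Icc.2 hac.le) hac
    linarith
  obtain ⟨x, hx, hx0⟩ : ∃ x ∈ Ioo (a+π/3) (a+π), Fc x = 0 := by
    have := intermediate_value_Ioo' hcb.le Fc_cont.continuousOn (a := a+π/3) (b := a+π)
    obtain ⟨x, hx, hx0⟩ := this ⟨hFb, hFc⟩
    exact ⟨x, hx, hx0⟩
  refine ⟨x, ⟨⟨by linarith [hx.1], hx.2⟩, hx0⟩, ?_⟩
  rintro y ⟨hy, hy0⟩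
  have hyc : a + π/3 < y := by
    by_contra hle
    push_neg at hle
    have := mono1 (left_mem_Icc.2 hac.le) ⟨hy.1.le, hle⟩ hy.1
    linarith
  exact anti2.injOn ⟨hyc.le, hy.2.le⟩ ⟨hx.1.le, hx.2.le⟩ (by rw [hy0, hx0])

lemma case_odd_real (a : ℝ) (ha : 0 < a)
    (hsin : ∀ x ∈ Ioo a (a+π), Real.sin x < 0)
    (hcos1 : ∀ x ∈ Ioo a (a+2*π/3), Real.cos x < 1/2)
    (hcos2 : ∀ x ∈ Ioo (a+2*π/3) (a+π), 1/2 < Real.cos x)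
    (hFa : Fc a < 0) (hFb : 0 < Fc (a+π)) :
    ∃! x, x ∈ Ioo a (a+π) ∧ Fc x = 0 := by
  have hpi := Real.pi_pos
  have hac : a < a + 2*π/3 := by linarith
  have hcb : a + 2*π/3 < a + π := by linarith
  have mono1 : StrictMonoOn Fc (Icc a (a+2*π/3)) := by
    apply strictMonoOn_of_deriv_pos (convex_Icc _ _) Fc_cont.continuousOn
    intro x hx
    rw [interior_Icc] at hx
    rw [(Fc_hasDeriv x).deriv]
    have hx0 : 0 < x := lt_trans ha hx.1
    have hs := hsin x ⟨hx.1, by linarith [hx.2]⟩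
    have hc := hcos1 x hx
    have h1 : 2 * x * Real.sin x < 0 := by
      apply mul_neg_of_pos_of_neg (by linarith) hs
    have h2 : 2 * Real.cos x - 1 < 0 := by linarith
    exact mul_pos_of_neg_of_neg h1 h2
  have anti2 : StrictAntiOn Fc (Icc (a+2*π/3) (a+π)) := by
    apply strictAntiOn_of_deriv_neg (convex_Icc _ _) Fc_cont.continuousOn
    intro x hx
    rw [interior_Icc] at hx
    rw [(Fc_hasDeriv x).deriv]
    have hx0 : 0 < x := by linarith [hx.1]
    have hs := hsin x ⟨by linarith [hx.1], hx.2⟩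
    have hc := hcos2 x hx
    have h1 : 2 * x * Real.sin x < 0 := mul_neg_of_pos_of_neg (by linarith) hs
    have h2 : 0 < 2 * Real.cos x - 1 := by linarith
    exact mul_neg_of_neg_of_pos h1 h2
  have hFc : 0 < Fc (a+2*π/3) := by
    have := anti2 (left_mem_Icc.2 hcb.le) (right_mem_Icc.2 hcb.le) hcb
    linarith
  obtain ⟨x, hx, hx0⟩ : ∃ x ∈ Ioo a (a+2*π/3), Fc x = 0 := by
    have := intermediate_value_Ioo hac.le Fc_cont.continuousOn (a := a) (b := a+2*π/3)
    obtain ⟨x, hx, hx0⟩ := this ⟨hFa, hFc⟩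
    exact ⟨x, hx, hx0⟩
  refine ⟨x, ⟨⟨hx.1, by linarith [hx.2]⟩, hx0⟩, ?_⟩
  rintro y ⟨hy, hy0⟩
  have hyc : y < a + 2*π/3 := by
    by_contra hle
    push_neg at hle
    have := anti2 ⟨hle, hy.2.le⟩ (right_mem_Icc.2 hcb.le) hy.2
    linarith
  exact mono1.injOn ⟨hy.1.le, hyc.le⟩ ⟨hx.1.le, hx.2.le⟩ (by rw [hy0, hx0])

lemma cos_two_pi_div_three : Real.cos (2*π/3) = -(1/2) := by
  rw [show (2*π/3) = π - π/3 by ring, Real.cos_pi_sub, Real.cos_pi_div_three]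

lemma key (k : ℕ) : ∃! x, x ∈ Ioo ((k:ℝ)*π) ((k:ℝ)*π+π) ∧ Fc x = 0 := by
  have hpi := Real.pi_pos
  rcases Nat.even_or_odd k with ⟨m, hm⟩ | ⟨m, hm⟩
  · -- k = 2m
    have ha : (k:ℝ)*π = (m:ℝ)*(2*π) := by rw [hm]; push_cast; ring
    rw [ha]
    have ham : 0 ≤ (m:ℝ)*(2*π) := by positivity
    apply case_even_real ((m:ℝ)*(2*π)) ham
    · intro x hx
      simp only [mem_Ioo] at hx
      rw [← Real.sin_sub_nat_mul_two_pi x m]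
      exact Real.sin_pos_of_pos_of_lt_pi (by linarith [hx.1]) (by linarith [hx.2])
    · intro x hx
      simp only [mem_Ioo] at hx
      rw [← Real.cos_sub_nat_mul_two_pi x m]
      have h1 : x - (m:ℝ)*(2*π) ∈ Icc 0 π := ⟨by linarith [hx.1], by linarith [hx.2]⟩
      have h2 : π/3 ∈ Icc 0 π := ⟨by linarith, by linarith⟩
      have := Real.strictAntiOn_cos h1 h2 (by linarith [hx.2])
      rw [Real.cos_pi_div_three] at this
      linarith
    · intro x hx
      simp only [mem_Ioo] at hx
      rw [← Real.cos_sub_nat_mul_two_pi x m]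
      have h1 : x - (m:ℝ)*(2*π) ∈ Icc 0 π := ⟨by linarith [hx.1], by linarith [hx.2]⟩
      have h2 : π/3 ∈ Icc 0 π := ⟨by linarith, by linarith⟩
      have := Real.strictAntiOn_cos h2 h1 (by linarith [hx.1])
      rw [Real.cos_pi_div_three] at this
      linarith
    · rw [Fc_even m]; positivity
    · rw [show (m:ℝ)*(2*π)+π = (m:ℝ)*(2*π)+π from rfl, Fc_odd m]
      have : (0:ℝ) < 3*((m:ℝ)*(2*π)+π) := by positivity
      linarith
  · -- k = 2m+1
    have ha : (k:ℝ)*π = (m:ℝ)*(2*π)+π := by rw [hm]; push_cast; ring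
    rw [ha]
    have hA : ∃ a : ℝ, a = (m:ℝ)*(2*π)+π := ⟨_, rfl⟩
    obtain ⟨a, ha'⟩ := hA
    rw [← ha']
    have ham : 0 < a := by rw [ha']; positivity
    have key_shift : ∀ x, x ∈ Ioo a (a+π) → (x - a ∈ Ioo (0:ℝ) π ∧
        Real.sin x = -Real.sin (x - a) ∧ Real.cos x = -Real.cos (x - a)) := by
      intro x hx
      simp only [mem_Ioo] at hx
      refine ⟨⟨by linarith [hx.1], by linarith [hx.2]⟩, ?_, ?_⟩
      · rw [← Real.sin_sub_nat_mul_two_pi x m, show x - (m:ℝ)*(2*π) = (x - a) + π by rw [ha']; ring,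
          Real.sin_add_pi]
      · rw [← Real.cos_sub_nat_mul_two_pi x m, show x - (m:ℝ)*(2*π) = (x - a) + π by rw [ha']; ring,
          Real.cos_add_pi]
    apply case_odd_real a ham
    · intro x hx
      obtain ⟨hw, hs, _⟩ := key_shift x hx
      rw [hs]
      have := Real.sin_pos_of_pos_of_lt_pi hw.1 hw.2
      linarith
    · intro x hx
      simp only [mem_Ioo] at hx
      obtain ⟨hw, _, hc⟩ := key_shift x ⟨hx.1, by linarith [hx.2]⟩
      rw [hc]
      have h1 : x - a ∈ Icc 0 π := ⟨hw.1.le, hw.2.le⟩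
      have h2 : 2*π/3 ∈ Icc 0 π := ⟨by linarith, by linarith⟩
      have := Real.strictAntiOn_cos h1 h2 (by linarith [hx.2])
      rw [cos_two_pi_div_three] at this
      linarith
    · intro x hx
      simp only [mem_Ioo] at hx
      obtain ⟨hw, _, hc⟩ := key_shift x ⟨by linarith [hx.1], hx.2⟩
      rw [hc]
      have h1 : x - a ∈ Icc 0 π := ⟨hw.1.le, hw.2.le⟩
      have h2 : 2*π/3 ∈ Icc 0 π := ⟨by linarith, by linarith⟩
      have := Real.strictAntiOn_cos h2 h1 (by linarith [hx.1])
      rw [cos_two_pi_div_three] at this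
      linarith
    · rw [ha', Fc_odd m]
      have : (0:ℝ) < 3*((m:ℝ)*(2*π)+π) := by positivity
      linarith
    · have h2 : a + π = ((m+1:ℕ):ℝ)*(2*π) := by rw [ha']; push_cast; ring
      rw [h2, Fc_even (m+1)]; positivity


theorem critical_points_localization
    (S : Set ℝ)
    (hS : S = {ζ : ℝ | 0 < ζ ∧
      Real.sin ζ / ζ
        = (2 * (Real.cos ζ)^2 - 2 * Real.cos ζ - 1) / (Real.cos ζ - 2)}) :
    (∀ j : ℕ, 1 ≤ j →
        ∃! ζ : ℝ, ζ ∈ S ∧ ζ ∈ Set.Ioo (((j:ℝ) - 1) * π) ((j:ℝ) * π))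
    ∧ (∀ ζ ∈ S, ∃ j : ℕ, 1 ≤ j ∧ ζ ∈ Set.Ioo (((j:ℝ) - 1) * π) ((j:ℝ) * π)) := by
  subst hS
  have hpi := Real.pi_pos
  constructor
  · intro j hj
    obtain ⟨x, ⟨hx, hx0⟩, hu⟩ := key (j-1)
    have hcast : ((j-1:ℕ):ℝ) = (j:ℝ) - 1 := by
      rw [Nat.cast_sub hj]; push_cast; ring
    have hb : ((j-1:ℕ):ℝ)*π + π = (j:ℝ)*π := by rw [hcast]; ring
    have hx' : x ∈ Ioo (((j:ℝ)-1)*π) ((j:ℝ)*π) := by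
      rw [← hcast, ← hb]; exact hx
    have hxpos : 0 < x := by
      have h0 : 0 ≤ ((j:ℝ)-1)*π := by
        have : (1:ℝ) ≤ (j:ℝ) := by exact_mod_cast hj
        nlinarith
      linarith [hx'.1]
    refine ⟨x, ⟨⟨hxpos, (mem_iff x hxpos).2 hx0⟩, hx'⟩, ?_⟩
    rintro y ⟨⟨hy0, hyeq⟩, hymem⟩
    apply hu
    refine ⟨?_, (mem_iff y hy0).1 hyeq⟩
    rw [← hcast, ← hb] at hymem
    exact hymem
  · rintro ζ ⟨hζ0, heq⟩
    have hF : Fc ζ = 0 := (mem_iff ζ hζ0).1 heq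
    set k := ⌊ζ/π⌋₊ with hk
    have hk1 : (k:ℝ) ≤ ζ/π := Nat.floor_le (by positivity)
    have hk2 : ζ/π < (k:ℝ)+1 := Nat.lt_floor_add_one _
    have hkπ : (k:ℝ)*π ≤ ζ := by
      rw [← le_div_iff₀ hpi]; exact hk1
    have hζk : ζ < ((k:ℝ)+1)*π := by
      rw [← div_lt_iff₀ hpi]; linarith
    have hne : (k:ℝ)*π ≠ ζ := by
      intro h
      have hz : (0:ℝ) < (k:ℝ)*π := by rw [h]; exact hζ0
      rcases Nat.even_or_odd k with ⟨m, hm⟩ | ⟨m, hm⟩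
      · have he : (k:ℝ)*π = (m:ℝ)*(2*π) := by rw [hm]; push_cast; ring
        rw [← h, he, Fc_even m] at hF
        rw [he] at hz
        linarith
      · have he : (k:ℝ)*π = (m:ℝ)*(2*π)+π := by rw [hm]; push_cast; ring
        rw [← h, he, Fc_odd m] at hF
        rw [he] at hz
        linarith
    refine ⟨k+1, Nat.le_add_left 1 k, ?_, ?_⟩
    · have : ((k+1:ℕ):ℝ) - 1 = (k:ℝ) := by push_cast; ring
      rw [this]
      exact lt_of_le_of_ne hkπ hne
    · push_cast
      linarith
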